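/- Let f be bi-univalent on 𝕌 with inverse extension g, let α ∈ (0,1], and suppose |arg f'(z)| < απ/2 and |arg g'(w)| < απ/2 for all z, w ∈ 𝕌 (the class B_Σ(α) of Srivastava–Mishra–Gochhayat). Then |a₂| ≤ α√(2/(α+2)) and |a₃| ≤ α(3α+2)/3. -/

import Mathlib

open Metric Complex Filter Set Function Topology

namespace SMG

lemma mobius_denom_ne {a w : ℂ} (ha : ‖a‖ < 1) (hw : ‖w‖ < 1) :
    1 - (starRingEnd ℂ) a * w ≠ 0 := by
  intro h
  have h1 : ‖(starRingEnd ℂ) a * w‖ < 1 := by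
    rw [norm_mul, RCLike.norm_conj]
    nlinarith [norm_nonneg a, norm_nonneg w]
  have : (1 : ℂ) = (starRingEnd ℂ) a * w := by linear_combination h
  rw [← this] at h1
  simp at h1

lemma normSq_lt_one {a : ℂ} (ha : ‖a‖ < 1) : normSq a < 1 := by
  rw [← Complex.sq_norm]
  nlinarith [norm_nonneg a]

lemma mobius_mapsTo {a w : ℂ} (ha : ‖a‖ < 1) (hw : ‖w‖ < 1) :
    ‖(w - a) / (1 - (starRingEnd ℂ) a * w)‖ < 1 := by
  rw [norm_div, div_lt_one ((norm_pos_iff).2 (mobius_denom_ne ha hw))]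
  have key : normSq (1 - (starRingEnd ℂ) a * w) - normSq (w - a)
      = (1 - normSq a) * (1 - normSq w) := by
    simp only [Complex.normSq_apply, Complex.sub_re, Complex.sub_im, Complex.mul_re,
      Complex.mul_im, Complex.conj_re, Complex.conj_im, Complex.one_re, Complex.one_im]
    ring
  have h2 : ‖w - a‖ ^ 2 < ‖1 - (starRingEnd ℂ) a * w‖ ^ 2 := by
    rw [Complex.sq_norm, Complex.sq_norm]
    nlinarith [normSq_lt_one ha, normSq_lt_one hw]
  nlinarith [norm_nonneg (w - a), norm_nonneg (1 - (starRingEnd ℂ) a * w)]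

lemma schwarzPick_zero {f : ℂ → ℂ} (hd : DifferentiableOn ℂ f (ball 0 1))
    (hm : Set.MapsTo f (ball 0 1) (ball 0 1)) :
    ‖deriv f 0‖ ≤ 1 - ‖f 0‖ ^ 2 := by
  have h0 : (0 : ℂ) ∈ ball (0 : ℂ) 1 := mem_ball_self one_pos
  set a := f 0 with ha'
  have ha : ‖a‖ < 1 := by simpa [mem_ball_zero_iff] using hm h0
  set χ : ℂ → ℂ := fun z => (f z - a) / (1 - (starRingEnd ℂ) a * f z) with hχ
  have hball : ∀ z ∈ ball (0 : ℂ) 1, ‖f z‖ < 1 := fun z hz => mem_ball_zero_iff.1 (hm hz)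
  have hχd : DifferentiableOn ℂ χ (ball 0 1) := by
    apply DifferentiableOn.div
    · exact hd.sub_const a
    · exact (differentiableOn_const _).sub ((differentiableOn_const _).mul hd)
    · exact fun z hz => mobius_denom_ne ha (hball z hz)
  have hχ0 : χ 0 = 0 := by simp [hχ, ← ha']
  have hχm : Set.MapsTo χ (ball 0 1) (ball (χ 0) 1) := by
    rw [hχ0]
    intro z hz
    exact mem_ball_zero_iff.2 (mobius_mapsTo ha (hball z hz))
  have hle : ‖deriv χ 0‖ ≤ 1 := by
    have := Complex.norm_deriv_le_div_of_mapsTo_ball hχd (hχm.mono_right ball_subset_closedBall) one_pos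
    simpa using this
  -- compute deriv χ 0
  have hfd : HasDerivAt f (deriv f 0) 0 :=
    (hd.differentiableAt (ball_mem_nhds _ one_pos)).hasDerivAt
  have hden : (1 : ℂ) - (starRingEnd ℂ) a * a ≠ 0 := mobius_denom_ne ha ha
  have hnum : HasDerivAt (fun z => f z - a) (deriv f 0) 0 := hfd.sub_const a
  have hdenf : HasDerivAt (fun z => 1 - (starRingEnd ℂ) a * f z)
      (-((starRingEnd ℂ) a * deriv f 0)) 0 := by
    simpa using ((hfd.const_mul ((starRingEnd ℂ) a)).const_sub 1)
  have hχder : HasDerivAt χ ((deriv f 0 * (1 - (starRingEnd ℂ) a * a) -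
      (a - a) * (-((starRingEnd ℂ) a * deriv f 0))) / (1 - (starRingEnd ℂ) a * a) ^ 2) 0 := by
    exact hnum.div hdenf hden
  have hχder' : deriv χ 0 = deriv f 0 / (1 - (starRingEnd ℂ) a * a) := by
    rw [hχder.deriv]
    field_simp
    ring
  rw [hχder'] at hle
  have hval : (1 : ℂ) - (starRingEnd ℂ) a * a = ((1 - ‖a‖ ^ 2 : ℝ) : ℂ) := by
    have : (starRingEnd ℂ) a * a = ((normSq a : ℝ) : ℂ) := by
      rw [mul_comm, Complex.mul_conj]
    rw [this, ← Complex.sq_norm]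
    push_cast
    rfl
  have hpos : (0 : ℝ) < 1 - ‖a‖ ^ 2 := by nlinarith [norm_nonneg a]
  rw [hval, norm_div, Complex.norm_real, Real.norm_of_nonneg hpos.le,
    div_le_one hpos] at hle
  simpa [← ha'] using hle

lemma dslope_rel {ω : ℂ → ℂ} (hω : AnalyticAt ℂ ω 0) (h0 : ω 0 = 0) :
    AnalyticAt ℂ (dslope ω 0) 0 ∧ deriv (deriv ω) 0 = 2 * deriv (dslope ω 0) 0 := by
  obtain ⟨p, hp⟩ := hω
  have hψ : HasFPowerSeriesAt (dslope ω 0) p.fslope 0 := hp.has_fpower_series_dslope_fslope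
  have hψa : AnalyticAt ℂ (dslope ω 0) 0 := ⟨_, hψ⟩
  refine ⟨hψa, ?_⟩
  set ψ := dslope ω 0 with hψdef
  have hωz : ∀ z : ℂ, ω z = z * ψ z := by
    intro z
    have := sub_smul_dslope ω 0 z
    simp only [sub_zero, smul_eq_mul, h0] at this
    rw [← this]
  have hderiv : deriv ω =ᶠ[𝓝 (0 : ℂ)] fun z => ψ z + z * deriv ψ z := by
    filter_upwards [hψa.eventually_analyticAt] with z hz
    have h1 : HasDerivAt ψ (deriv ψ z) z := hz.differentiableAt.hasDerivAt
    have h2 : HasDerivAt (fun w => w * ψ w) (1 * ψ z + z * deriv ψ z) z :=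
      (hasDerivAt_id z).mul h1
    have h3 : HasDerivAt ω (1 * ψ z + z * deriv ψ z) z := by
      have : ω = fun w => w * ψ w := funext hωz
      rw [this]; exact h2
    rw [h3.deriv]; ring
  rw [hderiv.deriv_eq]
  have hψ' : HasDerivAt ψ (deriv ψ 0) 0 := hψa.differentiableAt.hasDerivAt
  have hψ'' : HasDerivAt (deriv ψ) (deriv (deriv ψ) 0) 0 := by
    have hs : AnalyticOnNhd ℂ ψ {z | AnalyticAt ℂ ψ z} := fun z hz => hz
    exact (hs.deriv 0 hψa).differentiableAt.hasDerivAt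
  have h4 : HasDerivAt (fun z => z * deriv ψ z) (1 * deriv ψ 0 + 0 * deriv (deriv ψ) 0) 0 :=
    (hasDerivAt_id 0).mul hψ''
  have h5 := hψ'.add h4
  rw [HasDerivAt.deriv (f := fun z => ψ z + z * deriv ψ z) h5]; ring

lemma schwarz_second {ω : ℂ → ℂ} (hω : AnalyticOnNhd ℂ ω (ball 0 1)) (h0 : ω 0 = 0)
    (hm : Set.MapsTo ω (ball 0 1) (ball 0 1)) :
    ‖deriv ω 0‖ ≤ 1 ∧ ‖deriv (deriv ω) 0‖ ≤ 2 * (1 - ‖deriv ω 0‖ ^ 2) := by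
  have h0' : (0 : ℂ) ∈ ball (0 : ℂ) 1 := mem_ball_self one_pos
  have hd : DifferentiableOn ℂ ω (ball 0 1) := hω.differentiableOn
  have hb1 : ‖deriv ω 0‖ ≤ 1 := by
    have := schwarzPick_zero hd hm
    rw [h0] at this; simpa using this
  refine ⟨hb1, ?_⟩
  obtain ⟨hψa, hrel⟩ := dslope_rel (hω 0 h0') h0
  set ψ := dslope ω 0 with hψdef
  have hψ0 : ψ 0 = deriv ω 0 := dslope_same ω 0
  have hψd : DifferentiableOn ℂ ψ (ball 0 1) := by
    intro z hz
    rcases eq_or_ne z 0 with rfl | hne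
    · exact hψa.differentiableAt.differentiableWithinAt
    · exact (differentiableWithinAt_dslope_of_ne hne).2 (hd z hz)
  have hψle : ∀ z ∈ ball (0 : ℂ) 1, ‖ψ z‖ ≤ 1 := by
    intro z hz
    have hm' : Set.MapsTo ω (ball 0 1) (ball (ω 0) 1) := by rwa [h0]
    have := Complex.norm_dslope_le_div_of_mapsTo_ball hd (hm'.mono_right ball_subset_closedBall) hz
    simpa using this
  have hRHS : 0 ≤ 1 - ‖deriv ω 0‖ ^ 2 := by nlinarith [norm_nonneg (deriv ω 0)]
  by_cases hc : ∃ z₀ ∈ ball (0 : ℂ) 1, ‖ψ z₀‖ = 1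
  · obtain ⟨z₀, hz₀, hn⟩ := hc
    have hmax : IsMaxOn (norm ∘ ψ) (ball 0 1) z₀ := by
      intro z hz
      simp only [comp_apply, hn]
      exact hψle z hz
    have heq := Complex.eqOn_of_isPreconnected_of_isMaxOn_norm
      (convex_ball (0 : ℂ) 1).isPreconnected isOpen_ball hψd hz₀ hmax
    have hev : ψ =ᶠ[𝓝 (0 : ℂ)] fun _ => ψ z₀ := heq.eventuallyEq_of_mem (ball_mem_nhds _ one_pos)
    have : deriv ψ 0 = 0 := by rw [hev.deriv_eq]; simp
    rw [hrel, this]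
    simpa using hRHS
  · push_neg at hc
    have hm2 : Set.MapsTo ψ (ball 0 1) (ball 0 1) := fun z hz =>
      mem_ball_zero_iff.2 (lt_of_le_of_ne (hψle z hz) (hc z hz))
    have := schwarzPick_zero hψd hm2
    rw [hψ0] at this
    rw [hrel, norm_mul]
    simp only [Complex.norm_ofNat]
    nlinarith [this]

/-- Carathéodory coefficient bounds for the first two derivatives. -/
lemma caratheodory {P : ℂ → ℂ} (hP : AnalyticOnNhd ℂ P (ball 0 1)) (h0 : P 0 = 1)
    (hre : ∀ z ∈ ball (0 : ℂ) 1, 0 < (P z).re) :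
    ‖deriv P 0‖ ≤ 2 ∧ ‖deriv (deriv P) 0‖ ≤ 4 := by
  have h0' : (0 : ℂ) ∈ ball (0 : ℂ) 1 := mem_ball_self one_pos
  have hden : ∀ z ∈ ball (0 : ℂ) 1, P z + 1 ≠ 0 := by
    intro z hz h
    have hPz : P z = -1 := by linear_combination h
    have := hre z hz
    rw [hPz] at this
    simp at this
    linarith
  set ω : ℂ → ℂ := fun z => (P z - 1) / (P z + 1) with hωdef
  have hωa : AnalyticOnNhd ℂ ω (ball 0 1) :=
    (hP.sub analyticOnNhd_const).div (hP.add analyticOnNhd_const) hden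
  have hω0 : ω 0 = 0 := by simp [hωdef, h0]
  have hωm : Set.MapsTo ω (ball 0 1) (ball 0 1) := by
    intro z hz
    rw [mem_ball_zero_iff, hωdef]
    rw [norm_div, div_lt_one (norm_pos_iff.2 (hden z hz))]
    have key : normSq (P z + 1) - normSq (P z - 1) = 4 * (P z).re := by
      simp only [Complex.normSq_apply, Complex.add_re, Complex.add_im, Complex.sub_re,
        Complex.sub_im, Complex.one_re, Complex.one_im]
      ring
    have h2 : ‖P z - 1‖ ^ 2 < ‖P z + 1‖ ^ 2 := by
      rw [Complex.sq_norm, Complex.sq_norm]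
      nlinarith [hre z hz]
    nlinarith [norm_nonneg (P z - 1), norm_nonneg (P z + 1)]
  obtain ⟨hc1, hc2⟩ := schwarz_second hωa hω0 hωm
  -- derivative relations
  have hPd : HasDerivAt P (deriv P 0) 0 :=
    (hP 0 h0').differentiableAt.hasDerivAt
  have hωder : ∀ᶠ z in 𝓝 (0 : ℂ), deriv ω z = 2 * deriv P z / (P z + 1) ^ 2 := by
    have hball : ∀ᶠ z in 𝓝 (0 : ℂ), z ∈ ball (0 : ℂ) 1 := isOpen_ball.eventually_mem h0'
    filter_upwards [hball] with z hz
    have hPz : HasDerivAt P (deriv P z) z := (hP z hz).differentiableAt.hasDerivAt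
    have h1 : HasDerivAt (fun w => P w - 1) (deriv P z) z := hPz.sub_const 1
    have h2 : HasDerivAt (fun w => P w + 1) (deriv P z) z := hPz.add_const 1
    have h3 := h1.div h2 (hden z hz)
    rw [HasDerivAt.deriv (f := ω) h3]
    congr 1
    ring
  have hω1 : deriv ω 0 = deriv P 0 / 2 := by
    rw [hωder.self_of_nhds, h0]
    norm_num
    ring
  -- second derivative
  have hω2 : deriv (deriv ω) 0 = (deriv (deriv P) 0 - (deriv P 0) ^ 2) / 2 := by
    have hEE : deriv ω =ᶠ[𝓝 (0 : ℂ)] (fun z => 2 * deriv P z / (P z + 1) ^ 2) := hωder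
    rw [hEE.deriv_eq]
    have hP' : AnalyticOnNhd ℂ (deriv P) (ball 0 1) := hP.deriv
    have hP2 : HasDerivAt (deriv P) (deriv (deriv P) 0) 0 :=
      (hP' 0 h0').differentiableAt.hasDerivAt
    have h1 : HasDerivAt (fun z => 2 * deriv P z) (2 * deriv (deriv P) 0) 0 :=
      hP2.const_mul 2
    have h2 : HasDerivAt (fun z => (P z + 1) ^ 2) (2 * (P 0 + 1) ^ 1 * deriv P 0) 0 := by
      simpa using (show HasDerivAt (fun z => (P z + 1) ^ 2) _ 0 from (hPd.add_const 1).pow 2)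
    have hd2 : ((P 0 + 1) ^ 2 : ℂ) ≠ 0 := pow_ne_zero _ (hden 0 h0')
    have h3 := h1.div h2 hd2
    rw [HasDerivAt.deriv (f := fun z => 2 * deriv P z / (P z + 1) ^ 2) h3, h0]
    have : ((1 : ℂ) + 1) = 2 := by norm_num
    field_simp
    ring
  constructor
  · rw [hω1] at hc1
    rw [norm_div] at hc1
    simp only [Complex.norm_ofNat] at hc1
    linarith [(div_le_one (by norm_num : (0:ℝ) < 2)).1 hc1]
  · rw [hω2, hω1] at hc2
    rw [norm_div, norm_div] at hc2
    simp only [Complex.norm_ofNat] at hc2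
    have e1 : ‖deriv (deriv P) 0 - (deriv P 0) ^ 2‖ ≤ 4 - ‖deriv P 0‖ ^ 2 := by
      nlinarith [hc2]
    have e2 : deriv (deriv P) 0 = (deriv (deriv P) 0 - (deriv P 0) ^ 2) + (deriv P 0) ^ 2 := by
      ring
    calc ‖deriv (deriv P) 0‖
        = ‖(deriv (deriv P) 0 - (deriv P 0) ^ 2) + (deriv P 0) ^ 2‖ := by rw [← e2]
      _ ≤ ‖deriv (deriv P) 0 - (deriv P 0) ^ 2‖ + ‖(deriv P 0) ^ 2‖ := norm_add_le _ _
      _ = ‖deriv (deriv P) 0 - (deriv P 0) ^ 2‖ + ‖deriv P 0‖ ^ 2 := by rw [norm_pow]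
      _ ≤ (4 - ‖deriv P 0‖ ^ 2) + ‖deriv P 0‖ ^ 2 := by gcongr
      _ = 4 := by ring

lemma sector_bounds {F : ℂ → ℂ} {alpha : ℝ} (hα : 0 < alpha) (hα1 : alpha ≤ 1)
    (hF : AnalyticOnNhd ℂ F (ball 0 1)) (hF0 : F 0 = 1)
    (harg : ∀ z ∈ ball (0 : ℂ) 1, |Complex.arg (F z)| < alpha * Real.pi / 2) :
    ‖((alpha⁻¹ : ℝ) : ℂ) * deriv F 0‖ ≤ 2 ∧
    ‖((alpha⁻¹ : ℝ) : ℂ) * (deriv (deriv F) 0 - (deriv F 0) ^ 2) +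
      ((alpha⁻¹ : ℝ) : ℂ) ^ 2 * (deriv F 0) ^ 2‖ ≤ 4 := by
  have h0' : (0 : ℂ) ∈ ball (0 : ℂ) 1 := mem_ball_self one_pos
  have hπ : (0 : ℝ) < Real.pi := Real.pi_pos
  -- nonvanishing
  have hne : ∀ z ∈ ball (0 : ℂ) 1, F z ≠ 0 := by
    intro z₀ hz₀ h
    rcases (hF z₀ hz₀).eventually_constant_or_nhds_le_map_nhds with hconst | hmap
    · have heq : F =ᶠ[𝓝 z₀] (fun _ => (0 : ℂ)) := by
        filter_upwards [hconst] with z hz; rw [hz, h]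
      have := hF.eqOn_of_preconnected_of_eventuallyEq (analyticOnNhd_const)
        (convex_ball (0 : ℂ) 1).isPreconnected hz₀ heq
      have h1 := this h0'
      rw [hF0] at h1
      exact one_ne_zero h1
    · have h2 : F '' ball (0 : ℂ) 1 ∈ map F (𝓝 z₀) := by
        rw [mem_map]
        exact mem_of_superset (isOpen_ball.mem_nhds hz₀)
          (subset_preimage_image F (ball (0 : ℂ) 1))
      have himg : F '' ball (0 : ℂ) 1 ∈ 𝓝 (F z₀) := hmap h2
      rw [h] at himg
      obtain ⟨ε, hε, hball⟩ := Metric.mem_nhds_iff.1 himg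
      have hw : ((-(ε / 2) : ℝ) : ℂ) ∈ Metric.ball (0 : ℂ) ε := by
        rw [mem_ball_zero_iff]
        rw [Complex.norm_real, Real.norm_eq_abs]
        rw [abs_of_nonpos (by linarith)]
        linarith
      obtain ⟨z, hz, hFz⟩ := hball hw
      have hargz := harg z hz
      rw [hFz, Complex.arg_ofReal_of_neg (by linarith)] at hargz
      rw [abs_of_pos hπ] at hargz
      nlinarith
  -- positive real part
  have hre : ∀ z ∈ ball (0 : ℂ) 1, 0 < (F z).re := by
    intro z hz
    have h1 : |Complex.arg (F z)| < Real.pi / 2 := by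
      have := harg z hz
      nlinarith
    rcases Complex.abs_arg_lt_pi_div_two_iff.1 h1 with h | h
    · exact h
    · exact absurd h (hne z hz)
  have hslit : ∀ z ∈ ball (0 : ℂ) 1, F z ∈ Complex.slitPlane := fun z hz =>
    Or.inl (hre z hz)
  set c : ℂ := ((alpha⁻¹ : ℝ) : ℂ) with hc
  set P : ℂ → ℂ := fun z => Complex.exp (c * Complex.log (F z)) with hPdef
  have hPa : AnalyticOnNhd ℂ P (ball 0 1) := by
    intro z hz
    exact (analyticAt_const.mul ((analyticAt_clog (hslit z hz)).comp (hF z hz))).cexp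
  have hP0 : P 0 = 1 := by
    simp [hPdef, hF0, Complex.log_one]
  have hPre : ∀ z ∈ ball (0 : ℂ) 1, 0 < (P z).re := by
    intro z hz
    rw [hPdef]
    simp only []
    rw [Complex.exp_re]
    apply mul_pos (Real.exp_pos _)
    apply Real.cos_pos_of_mem_Ioo
    have him : (c * Complex.log (F z)).im = alpha⁻¹ * Complex.arg (F z) := by
      rw [hc]
      simp [Complex.mul_im, Complex.log_im]
    rw [him]
    have habs : |alpha⁻¹ * Complex.arg (F z)| < Real.pi / 2 := by
      rw [abs_mul, abs_of_pos (inv_pos.2 hα)]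
      have := harg z hz
      have h2 : alpha⁻¹ * |Complex.arg (F z)| < alpha⁻¹ * (alpha * Real.pi / 2) := by
        apply mul_lt_mul_of_pos_left this (inv_pos.2 hα)
      calc alpha⁻¹ * |Complex.arg (F z)| < alpha⁻¹ * (alpha * Real.pi / 2) := h2
        _ = Real.pi / 2 := by field_simp
    constructor <;> [linarith [abs_lt.1 habs]; linarith [abs_lt.1 habs]]
  -- derivative formula
  have hPder : ∀ᶠ z in 𝓝 (0 : ℂ), deriv P z = P z * (c * (deriv F z / F z)) := by
    filter_upwards [isOpen_ball.eventually_mem h0'] with z hz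
    have hFd : HasDerivAt F (deriv F z) z := (hF z hz).differentiableAt.hasDerivAt
    have hlog : HasDerivAt (fun w => Complex.log (F w)) (deriv F z / F z) z :=
      hFd.clog (hslit z hz)
    have hu : HasDerivAt (fun w => c * Complex.log (F w)) (c * (deriv F z / F z)) z :=
      hlog.const_mul c
    have hexp := hu.cexp
    rw [hexp.deriv]
  have hP1 : deriv P 0 = c * deriv F 0 := by
    rw [hPder.self_of_nhds, hP0, hF0]
    simp
  have hP2 : deriv (deriv P) 0 = c * (deriv (deriv F) 0 - (deriv F 0) ^ 2) +
      c ^ 2 * (deriv F 0) ^ 2 := by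
    have hEE : deriv P =ᶠ[𝓝 (0 : ℂ)] fun z => P z * (c * (deriv F z / F z)) := hPder
    rw [hEE.deriv_eq]
    have hPd0 : HasDerivAt P (deriv P 0) 0 := (hPa 0 h0').differentiableAt.hasDerivAt
    have hF'0 : HasDerivAt (deriv F) (deriv (deriv F) 0) 0 :=
      (hF.deriv 0 h0').differentiableAt.hasDerivAt
    have hF0' : HasDerivAt F (deriv F 0) 0 := (hF 0 h0').differentiableAt.hasDerivAt
    have hq : HasDerivAt (fun z => deriv F z / F z)
        ((deriv (deriv F) 0 * F 0 - deriv F 0 * deriv F 0) / (F 0) ^ 2) 0 :=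
      hF'0.div hF0' (hne 0 h0')
    have hmul := hPd0.mul (hq.const_mul c)
    rw [HasDerivAt.deriv (f := fun z => P z * (c * (deriv F z / F z))) hmul, hP0, hF0, hP1]
    simp only [div_one, one_pow, mul_one, one_mul]
    ring
  obtain ⟨hb1, hb2⟩ := caratheodory hPa hP0 hPre
  rw [hP1] at hb1
  rw [hP2] at hb2
  exact ⟨hb1, hb2⟩

end SMG

open SMG

/-- Srivastava–Mishra–Gochhayat: if `f` is bi-univalent with inverse extension `g`
and `|arg f'| < απ/2`, `|arg g'| < απ/2` on the unit disk, then
`|a₂| ≤ α √(2/(α+2))` and `|a₃| ≤ α(3α+2)/3`. -/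
theorem srivastava_class_bounds
    (f g : ℂ → ℂ)
    (hf : AnalyticOnNhd ℂ f (ball (0 : ℂ) 1)) (hfinj : Set.InjOn f (ball (0 : ℂ) 1))
    (hf0 : f 0 = 0) (hf1 : deriv f 0 = 1)
    (hg : AnalyticOnNhd ℂ g (ball (0 : ℂ) 1)) (hginj : Set.InjOn g (ball (0 : ℂ) 1))
    (hgf : ∀ᶠ z in nhds (0 : ℂ), g (f z) = z)
    (alpha : ℝ) (halpha : 0 < alpha ∧ alpha ≤ 1)
    (hfarg : ∀ z ∈ ball (0 : ℂ) 1, |Complex.arg (deriv f z)| < alpha * Real.pi / 2)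
    (hgarg : ∀ w ∈ ball (0 : ℂ) 1, |Complex.arg (deriv g w)| < alpha * Real.pi / 2)
    (a₂ a₃ : ℂ) (ha₂ : a₂ = iteratedDeriv 2 f 0 / 2) (ha₃ : a₃ = iteratedDeriv 3 f 0 / 6) :
    ‖a₂‖ ≤ alpha * Real.sqrt (2 / (alpha + 2)) ∧ ‖a₃‖ ≤ alpha * (3 * alpha + 2) / 3 := by
  obtain ⟨hα, hα1⟩ := halpha
  have h0' : (0 : ℂ) ∈ ball (0 : ℂ) 1 := mem_ball_self one_pos
  set F : ℂ → ℂ := deriv f with hF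
  set G : ℂ → ℂ := deriv g with hG
  have hFa : AnalyticOnNhd ℂ F (ball 0 1) := hf.deriv
  have hGa : AnalyticOnNhd ℂ G (ball 0 1) := hg.deriv
  set F2 : ℂ → ℂ := deriv F with hF2
  set G2 : ℂ → ℂ := deriv G with hG2
  set F3 : ℂ → ℂ := deriv F2 with hF3
  set G3 : ℂ → ℂ := deriv G2 with hG3
  have hF2a : AnalyticOnNhd ℂ F2 (ball 0 1) := hFa.deriv
  have hG2a : AnalyticOnNhd ℂ G2 (ball 0 1) := hGa.deriv
  -- eventual membership
  have hmem : ∀ᶠ z in 𝓝 (0 : ℂ), z ∈ ball (0 : ℂ) 1 ∧ f z ∈ ball (0 : ℂ) 1 := by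
    have h1 : ∀ᶠ z in 𝓝 (0 : ℂ), z ∈ ball (0 : ℂ) 1 := isOpen_ball.eventually_mem h0'
    have h2 : ∀ᶠ z in 𝓝 (0 : ℂ), f z ∈ ball (0 : ℂ) 1 := by
      have hc : ContinuousAt f 0 := (hf 0 h0').continuousAt
      have := hc.preimage_mem_nhds (isOpen_ball.mem_nhds (by rw [hf0]; exact h0'))
      exact this
    exact h1.and h2
  -- first chain rule identity
  have hE1 : (fun z => G (f z) * F z) =ᶠ[𝓝 (0 : ℂ)] fun _ => (1 : ℂ) := by
    have hid : (fun z => g (f z)) =ᶠ[𝓝 (0 : ℂ)] id := hgf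
    have hd := hid.deriv
    filter_upwards [hd, hmem] with z hz hzm
    obtain ⟨hz1, hz2⟩ := hzm
    have hfz : HasDerivAt f (F z) z := (hf z hz1).differentiableAt.hasDerivAt
    have hgz : HasDerivAt g (G (f z)) (f z) := (hg _ hz2).differentiableAt.hasDerivAt
    have hcomp : HasDerivAt (fun w => g (f w)) (G (f z) * F z) z := hgz.comp z hfz
    rw [← hcomp.deriv, hz, deriv_id]
  have hF0 : F 0 = 1 := hf1
  have hG0 : G 0 = 1 := by
    have h := hE1.self_of_nhds
    simp only [hf0, hF0, mul_one] at h
    exact h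
  -- second identity
  have hE2 : (fun z => G2 (f z) * F z * F z + G (f z) * F2 z) =ᶠ[𝓝 (0 : ℂ)]
      fun _ => (0 : ℂ) := by
    have hd := hE1.deriv
    filter_upwards [hd, hmem] with z hz hzm
    obtain ⟨hz1, hz2⟩ := hzm
    have hfz : HasDerivAt f (F z) z := (hf z hz1).differentiableAt.hasDerivAt
    have hGz : HasDerivAt G (G2 (f z)) (f z) := (hGa _ hz2).differentiableAt.hasDerivAt
    have h1 : HasDerivAt (fun w => G (f w)) (G2 (f z) * F z) z := hGz.comp z hfz
    have hF2z : HasDerivAt F (F2 z) z := (hFa z hz1).differentiableAt.hasDerivAt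
    have h2 : HasDerivAt (fun w => G (f w) * F w)
        (G2 (f z) * F z * F z + G (f z) * F2 z) z := h1.mul hF2z
    rw [← h2.deriv, hz]
    simp
  have hG20 : G2 0 = -(F2 0) := by
    have h := hE2.self_of_nhds
    simp only [hf0, hF0, hG0, mul_one, one_mul] at h
    linear_combination h
  -- third identity (at 0 only)
  have hE3 : G3 0 + 3 * G2 0 * F2 0 + F3 0 = 0 := by
    have hd := hE2.deriv.self_of_nhds
    have hfz : HasDerivAt f (F 0) 0 := (hf 0 h0').differentiableAt.hasDerivAt
    have hf00 : f 0 ∈ ball (0 : ℂ) 1 := by rw [hf0]; exact h0'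
    have hG2z : HasDerivAt G2 (G3 (f 0)) (f 0) := (hG2a _ hf00).differentiableAt.hasDerivAt
    have h1 : HasDerivAt (fun w => G2 (f w)) (G3 (f 0) * F 0) 0 := hG2z.comp 0 hfz
    have hFz : HasDerivAt F (F2 0) 0 := (hFa 0 h0').differentiableAt.hasDerivAt
    have hF2z : HasDerivAt F2 (F3 0) 0 := (hF2a 0 h0').differentiableAt.hasDerivAt
    have hGz : HasDerivAt G (G2 (f 0)) (f 0) := (hGa _ hf00).differentiableAt.hasDerivAt
    have h4 : HasDerivAt (fun w => G (f w)) (G2 (f 0) * F 0) 0 := hGz.comp 0 hfz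
    have h2 : HasDerivAt (fun w => G2 (f w) * F w)
        (G3 (f 0) * F 0 * F 0 + G2 (f 0) * F2 0) 0 := h1.mul hFz
    have h3 : HasDerivAt (fun w => G2 (f w) * F w * F w)
        ((G3 (f 0) * F 0 * F 0 + G2 (f 0) * F2 0) * F 0 + G2 (f 0) * F 0 * F2 0) 0 :=
      h2.mul hFz
    have h5 : HasDerivAt (fun w => G (f w) * F2 w)
        (G2 (f 0) * F 0 * F2 0 + G (f 0) * F3 0) 0 := h4.mul hF2z
    have h6 := h3.add h5
    have h7 : ((G3 (f 0) * F 0 * F 0 + G2 (f 0) * F2 0) * F 0 + G2 (f 0) * F 0 * F2 0)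
        + (G2 (f 0) * F 0 * F2 0 + G (f 0) * F3 0) = 0 := by
      rw [← HasDerivAt.deriv (f := fun z => G2 (f z) * F z * F z + G (f z) * F2 z) h6, hd]
      simp
    rw [hf0, hF0, hG0] at h7
    linear_combination h7
  -- coefficient identification
  have hcoef2 : F2 0 = 2 * a₂ := by
    rw [ha₂]
    have : iteratedDeriv 2 f 0 = F2 0 := by
      rw [iteratedDeriv_succ, iteratedDeriv_one]
    rw [this]; ring
  have hcoef3 : F3 0 = 6 * a₃ := by
    rw [ha₃]
    have : iteratedDeriv 3 f 0 = F3 0 := by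
      rw [iteratedDeriv_succ, iteratedDeriv_succ, iteratedDeriv_one]
    rw [this]; ring
  have hGc2 : G2 0 = -(2 * a₂) := by rw [hG20, hcoef2]
  have hGc3 : G3 0 = 12 * a₂ ^ 2 - 6 * a₃ := by
    have := hE3
    rw [hGc2, hcoef2, hcoef3] at this
    linear_combination this
  -- sector bounds
  obtain ⟨_, hA2⟩ := SMG.sector_bounds hα hα1 hFa hF0 hfarg
  obtain ⟨_, hB2⟩ := SMG.sector_bounds hα hα1 hGa hG0 hgarg
  set c : ℂ := ((alpha⁻¹ : ℝ) : ℂ) with hc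
  -- rewrite in terms of a₂ a₃
  rw [show deriv F 0 = F2 0 from rfl, show deriv (deriv F) 0 = F3 0 from rfl,
    hcoef2, hcoef3] at hA2
  rw [show deriv G 0 = G2 0 from rfl, show deriv (deriv G) 0 = G3 0 from rfl,
    hGc2, hGc3] at hB2
  set A : ℂ := c * (6 * a₃ - (2 * a₂) ^ 2) + c ^ 2 * (2 * a₂) ^ 2 with hA
  set B : ℂ := c * ((12 * a₂ ^ 2 - 6 * a₃) - (-(2 * a₂)) ^ 2) + c ^ 2 * (-(2 * a₂)) ^ 2 with hB
  have hA4 : ‖A‖ ≤ 4 := hA2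
  have hB4 : ‖B‖ ≤ 4 := hB2
  have ht : (0 : ℝ) < alpha⁻¹ := inv_pos.2 hα
  -- sum and difference
  have hsum : A + B = (4 * c + 8 * c ^ 2) * a₂ ^ 2 := by rw [hA, hB]; ring
  have hdiff : A - B = 12 * c * (a₃ - a₂ ^ 2) := by rw [hA, hB]; ring
  have hnormsum : ‖(4 * c + 8 * c ^ 2) * a₂ ^ 2‖ ≤ 8 := by
    rw [← hsum]
    calc ‖A + B‖ ≤ ‖A‖ + ‖B‖ := norm_add_le _ _
      _ ≤ 8 := by linarith
  have hnormdiff : ‖12 * c * (a₃ - a₂ ^ 2)‖ ≤ 8 := by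
    rw [← hdiff]
    calc ‖A - B‖ ≤ ‖A‖ + ‖B‖ := norm_sub_le _ _
      _ ≤ 8 := by linarith
  -- compute scalar norms
  have hcnorm : ‖c‖ = alpha⁻¹ := by
    rw [hc, Complex.norm_real, Real.norm_of_nonneg ht.le]
  have hfactor : ‖4 * c + 8 * c ^ 2‖ = 4 * alpha⁻¹ + 8 * alpha⁻¹ ^ 2 := by
    have : 4 * c + 8 * c ^ 2 = (((4 * alpha⁻¹ + 8 * alpha⁻¹ ^ 2 : ℝ)) : ℂ) := by
      rw [hc]; push_cast; ring
    rw [this, Complex.norm_real, Real.norm_of_nonneg (by positivity)]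
  have ha2sq : (4 * alpha⁻¹ + 8 * alpha⁻¹ ^ 2) * ‖a₂‖ ^ 2 ≤ 8 := by
    have := hnormsum
    rw [norm_mul, hfactor, norm_pow] at this
    exact this
  have ha2bound : ‖a₂‖ ^ 2 ≤ 2 * alpha ^ 2 / (alpha + 2) := by
    have key : (4 * alpha⁻¹ + 8 * alpha⁻¹ ^ 2) = (4 * alpha + 8) / alpha ^ 2 := by
      field_simp
    rw [key] at ha2sq
    rw [div_mul_eq_mul_div, div_le_iff₀ (by positivity : (0:ℝ) < alpha ^ 2)] at ha2sq
    rw [le_div_iff₀ (by positivity : (0:ℝ) < alpha + 2)]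
    nlinarith [ha2sq]
  have goal1 : ‖a₂‖ ≤ alpha * Real.sqrt (2 / (alpha + 2)) := by
    have hs := Real.sqrt_le_sqrt ha2bound
    rw [Real.sqrt_sq (norm_nonneg a₂)] at hs
    have heq : Real.sqrt (2 * alpha ^ 2 / (alpha + 2)) = alpha * Real.sqrt (2 / (alpha + 2)) := by
      rw [show 2 * alpha ^ 2 / (alpha + 2) = alpha ^ 2 * (2 / (alpha + 2)) by ring,
        Real.sqrt_mul (sq_nonneg alpha), Real.sqrt_sq hα.le]
    rw [heq] at hs
    exact hs
  refine ⟨goal1, ?_⟩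
  -- a₃ bound
  have hinv : alpha * alpha⁻¹ = 1 := mul_inv_cancel₀ hα.ne'
  have hd3 : ‖a₃ - a₂ ^ 2‖ ≤ 2 * alpha / 3 := by
    have hrw : 12 * c * (a₃ - a₂ ^ 2) = (((12 * alpha⁻¹ : ℝ)) : ℂ) * (a₃ - a₂ ^ 2) := by
      rw [hc]; push_cast; ring
    rw [hrw, norm_mul, Complex.norm_real, Real.norm_of_nonneg (by positivity)] at hnormdiff
    have h8 := mul_le_mul_of_nonneg_left hnormdiff hα.le
    nlinarith [norm_nonneg (a₃ - a₂ ^ 2)]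
  have hsq : ‖a₂ ^ 2‖ ≤ 2 * alpha ^ 2 / (alpha + 2) := by
    rw [norm_pow]; exact ha2bound
  have hle : 2 * alpha ^ 2 / (alpha + 2) ≤ alpha ^ 2 := by
    rw [div_le_iff₀ (by positivity : (0:ℝ) < alpha + 2)]
    nlinarith
  calc ‖a₃‖ = ‖a₂ ^ 2 + (a₃ - a₂ ^ 2)‖ := by ring_nf
    _ ≤ ‖a₂ ^ 2‖ + ‖a₃ - a₂ ^ 2‖ := norm_add_le _ _
    _ ≤ alpha ^ 2 + 2 * alpha / 3 := by linarith
    _ = alpha * (3 * alpha + 2) / 3 := by ring
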